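/- Let T, V be bounded linear invertible operators on a complex Hilbert space H. Then for every x ∈ H with x ≠ 0: ⟨⊙(T|V)x, x⟩ ≤ ‖Tx‖²·ln(‖Vx‖²/‖Tx‖²) ≤ ‖Vx‖² − ‖Tx‖², where ⊙(T|V) is the quadratic relative operator entropy; in particular the first inequality improves the known bound ⟨⊙(T|V)x, x⟩ ≤ ‖Vx‖² − ‖Tx‖². -/

import Mathlib

variable {H : Type*} [NormedAddCommGroup H] [InnerProductSpace ℂ H] [CompleteSpace H]

/-- `X = |VT⁻¹|² = (T*)⁻¹ V* V T⁻¹`. -/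
noncomputable def qX (V T : (H →L[ℂ] H)ˣ) : H →L[ℂ] H :=
  star (↑(T⁻¹) : H →L[ℂ] H) * (star (V : H →L[ℂ] H) * (V : H →L[ℂ] H)) * (↑(T⁻¹) : H →L[ℂ] H)

/-- The quadratic operator perspective `⊙_Φ(V,T) = T* Φ(X) T`. -/
noncomputable def qPersp (Φ : ℝ → ℝ) (V T : (H →L[ℂ] H)ˣ) : H →L[ℂ] H :=
  star (T : H →L[ℂ] H) * cfc Φ (qX V T) * (T : H →L[ℂ] H)

/-- `|T|² = T*T`. -/
noncomputable def modSq (T : (H →L[ℂ] H)ˣ) : H →L[ℂ] H :=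
  star (T : H →L[ℂ] H) * (T : H →L[ℂ] H)

lemma conj_inner' (M A : H →L[ℂ] H) (x : H) :
    (inner ℂ ((star A * M * A) x) x : ℂ) = inner ℂ (M (A x)) (A x) := by
  simp only [ContinuousLinearMap.mul_apply, ContinuousLinearMap.star_eq_adjoint]
  rw [ContinuousLinearMap.adjoint_inner_left]

lemma rclike_coe_complex : ((RCLike.ofReal : ℝ → ℂ)) = Complex.ofReal := rfl

lemma star_self_inner (A : H →L[ℂ] H) (x : H) :
    (inner ℂ ((star A * A) x) x : ℂ) = inner ℂ (A x) (A x) := by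
  simp only [ContinuousLinearMap.mul_apply, ContinuousLinearMap.star_eq_adjoint]
  rw [ContinuousLinearMap.adjoint_inner_left]

theorem stmt19 (T V : (H →L[ℂ] H)ˣ) (x : H) (hx : x ≠ 0) :
    (inner ℂ ((qPersp Real.log V T) x) x : ℂ).re ≤
        ‖(T : H →L[ℂ] H) x‖ ^ 2 * Real.log (‖(V : H →L[ℂ] H) x‖ ^ 2 / ‖(T : H →L[ℂ] H) x‖ ^ 2) ∧
      ‖(T : H →L[ℂ] H) x‖ ^ 2 * Real.log (‖(V : H →L[ℂ] H) x‖ ^ 2 / ‖(T : H →L[ℂ] H) x‖ ^ 2) ≤ ‖(V : H →L[ℂ] H) x‖ ^ 2 - ‖(T : H →L[ℂ] H) x‖ ^ 2 := by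
  set X := qX V T with hXdef
  set T' := (T : H →L[ℂ] H)
  set V' := (V : H →L[ℂ] H)
  have hXfact : X = star (V' * (↑(T⁻¹) : H →L[ℂ] H)) * (V' * (↑(T⁻¹) : H →L[ℂ] H)) := by
    simp [hXdef, qX, star_mul, mul_assoc]
    rfl
  have hXnn : (0 : H →L[ℂ] H) ≤ X := hXfact ▸ star_mul_self_nonneg _
  have hXsa : IsSelfAdjoint X := hXfact ▸ IsSelfAdjoint.star_mul_self _
  have hXunit : IsUnit X := by
    rw [hXfact]
    exact ((V.isUnit.mul (T⁻¹).isUnit).star.mul (V.isUnit.mul (T⁻¹).isUnit))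
  have hspec : ∀ t ∈ spectrum ℝ X, 0 < t := by
    intro t ht
    have h0 : (0:ℝ) ∉ spectrum ℝ X := spectrum.zero_notMem_iff ℝ |>.mpr hXunit
    rcases (spectrum_nonneg_of_nonneg hXnn ht).lt_or_eq with h | h
    · exact h
    · exact absurd (h ▸ ht) h0
  have hTx : T' x ≠ 0 := fun h => hx (by
    have hinv : x = (↑(T⁻¹) : H →L[ℂ] H) (T' x) := by
      rw [← ContinuousLinearMap.mul_apply, ← Units.val_mul]; simp
    rw [hinv, h, map_zero])
  have hVx : V' x ≠ 0 := fun h => hx (by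
    have hinv : x = (↑(V⁻¹) : H →L[ℂ] H) (V' x) := by
      rw [← ContinuousLinearMap.mul_apply, ← Units.val_mul]; simp
    rw [hinv, h, map_zero])
  set y := T' x with hy_def
  set n := ‖y‖ ^ 2 with hn_def
  set m := ‖V' x‖ ^ 2 with hm_def
  have hn : 0 < n := hn_def ▸ pow_pos (norm_pos_iff.2 hTx) 2
  have hm : 0 < m := hm_def ▸ pow_pos (norm_pos_iff.2 hVx) 2
  set b := m / n with hb_def
  have hb : 0 < b := by positivity
  have hT1 : (↑(T⁻¹) : H →L[ℂ] H) y = x := by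
    rw [hy_def, ← ContinuousLinearMap.mul_apply, ← Units.val_mul]; simp
  have hXy : (inner ℂ (X y) y : ℂ) = (m : ℂ) := by
    rw [hXdef]
    show (inner ℂ ((star (↑(T⁻¹) : H →L[ℂ] H) * (star V' * V') * ↑(T⁻¹)) y) y : ℂ) = _
    rw [conj_inner' (star V' * V') (↑(T⁻¹)) y, hT1, star_self_inner V' x,
      inner_self_eq_norm_sq_to_K]
    norm_cast
  have key : cfc Real.log X ≤ cfc (fun t => (Real.log b - 1) + b⁻¹ * t) X := by
    apply cfc_mono
    · intro t ht
      have htpos := hspec t ht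
      have h1 : Real.log (t / b) ≤ t / b - 1 := Real.log_le_sub_one_of_pos (by positivity)
      rw [Real.log_div htpos.ne' hb.ne'] at h1
      have h2 : b⁻¹ * t = t / b := by ring
      linarith
    · exact Real.continuousOn_log.mono fun t ht => (hspec t ht).ne'
    · exact (continuous_const.add (continuous_const.mul continuous_id')).continuousOn
  have haff : cfc (fun t => (Real.log b - 1) + b⁻¹ * t) X
      = (Real.log b - 1) • (1 : H →L[ℂ] H) + b⁻¹ • X := by
    rw [cfc_const_add _ (fun t => b⁻¹ * t) _ ((continuous_const.mul continuous_id').continuousOn),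
      cfc_const_mul_id b⁻¹ X, Algebra.algebraMap_eq_smul_one]
  have hmono : (inner ℂ ((cfc Real.log X) y) y : ℂ).re ≤
      (inner ℂ (((Real.log b - 1) • (1 : H →L[ℂ] H) + b⁻¹ • X) y) y : ℂ).re := by
    rw [← haff]
    have h3 := (ContinuousLinearMap.le_def _ _ |>.mp key).inner_nonneg_left y
    rw [ContinuousLinearMap.sub_apply, inner_sub_left] at h3
    have h4 := (Complex.le_def.mp h3).1
    simp only [Complex.zero_re, Complex.sub_re] at h4
    linarith
  have hrhs : (inner ℂ (((Real.log b - 1) • (1 : H →L[ℂ] H) + b⁻¹ • X) y) y : ℂ).re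
      = n * Real.log b := by
    have hsm : ∀ (r : ℝ) (z : H), (r • z) = ((r : ℂ) • z) := fun r z =>
      (RCLike.real_smul_eq_coe_smul (K := ℂ) r z)
    have hbm : b⁻¹ * m = n := by
      rw [hb_def]; field_simp
    have e1 : (inner ℂ (((Real.log b - 1) • (1 : H →L[ℂ] H) + b⁻¹ • X) y) y : ℂ)
        = ((Real.log b - 1 : ℝ) : ℂ) * ((‖y‖ ^ 2 : ℝ) : ℂ) + ((b⁻¹ : ℝ) : ℂ) * (m : ℂ) := by
      simp only [ContinuousLinearMap.add_apply, ContinuousLinearMap.smul_apply,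
        ContinuousLinearMap.one_apply, inner_add_left, hsm, inner_smul_left, hXy,
        Complex.conj_ofReal, inner_self_eq_norm_sq_to_K, rclike_coe_complex]
      push_cast
      ring
    rw [e1]
    have e2 : ((Real.log b - 1 : ℝ) : ℂ) * ((‖y‖ ^ 2 : ℝ) : ℂ) + ((b⁻¹ : ℝ) : ℂ) * (m : ℂ)
        = (((Real.log b - 1) * ‖y‖ ^ 2 + b⁻¹ * m : ℝ) : ℂ) := by push_cast; ring
    rw [e2, Complex.ofReal_re, ← hn_def, hbm]
    ring
  have hlhs : (inner ℂ ((qPersp Real.log V T) x) x : ℂ) = inner ℂ ((cfc Real.log X) y) y := by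
    rw [qPersp]
    exact conj_inner' (cfc Real.log X) T' x
  have hlog : Real.log b = Real.log (m / n) := by rw [hb_def]
  constructor
  · calc (inner ℂ ((qPersp Real.log V T) x) x : ℂ).re
        = (inner ℂ ((cfc Real.log X) y) y : ℂ).re := by rw [hlhs]
      _ ≤ n * Real.log b := hmono.trans_eq hrhs
      _ = n * Real.log (m / n) := by rw [hlog]
  · have h1 : Real.log b ≤ b - 1 := Real.log_le_sub_one_of_pos hb
    have hbn : n * b = m := by rw [hb_def]; field_simp
    calc n * Real.log (m / n) = n * Real.log b := by rw [hlog]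
      _ ≤ n * (b - 1) := by nlinarith
      _ = m - n := by rw [mul_sub, hbn]; ring
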